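/- Suppose K = F₂, S is a basis of X not of orthogonal type, and G(S) is connected, so that G(S) is the line graph of a connected multigraph G = (V,E) and S is identified with E. Then two elements β, γ ∈ X* belong to the same orbit of the dual transvection group Tr(S)* if and only if γ − β ∈ im ω and either β ∉ im δ, or β ∈ im δ and d(y) = d(z) for some y, z ∈ ⟨V⟩ with δ(y) = β and δ(z) = γ. -/

import Mathlib

/-- Symplectic transvections as permutations. -/
def transvectionSet {K X : Type*} [Field K] [AddCommGroup X] [Module K X]
    (ω : X →ₗ[K] X →ₗ[K] K) (S : Set X) : Set (Equiv.Perm X) :=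
  {f | ∃ s ∈ S, ∃ k : K, k ≠ 0 ∧ ∀ x, f x = x + (k * ω x s) • s}

/-- The transvection group `Tr(S)`. -/
def transvectionGroup {K X : Type*} [Field K] [AddCommGroup X] [Module K X]
    (ω : X →ₗ[K] X →ₗ[K] K) (S : Set X) : Subgroup (Equiv.Perm X) :=
  Subgroup.closure (transvectionSet ω S)

/-- The graph `G(S)`. -/
def transGraph {K X : Type*} [Field K] [AddCommGroup X] [Module K X]
    (ω : X →ₗ[K] X →ₗ[K] K) (S : Set X) : SimpleGraph S :=
  SimpleGraph.fromRel (fun u v => ω u.1 v.1 ≠ 0)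

/-- One t-equivalence step. -/
def tStep {X : Type*} [AddCommGroup X] [Module (ZMod 2) X]
    (ω : X →ₗ[ZMod 2] X →ₗ[ZMod 2] ZMod 2) (S S' : Set X) : Prop :=
  ∃ s ∈ S, ∃ t ∈ S, s ≠ t ∧ ω s t = 1 ∧ S' = insert (s + t) (S \ {t})

/-- t-equivalence. -/
def tEquiv {X : Type*} [AddCommGroup X] [Module (ZMod 2) X]
    (ω : X →ₗ[ZMod 2] X →ₗ[ZMod 2] ZMod 2) : Set X → Set X → Prop :=
  Relation.ReflTransGen (tStep ω)

/-- The graph `E₆`. -/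
def e6Graph : SimpleGraph (Fin 6) :=
  SimpleGraph.fromRel
    (fun i j => (i, j) ∈ [((0 : Fin 6), (1 : Fin 6)), (1, 2), (2, 3), (3, 4), (2, 5)])

/-- Orthogonal type. -/
def IsOrthogonalType {X : Type*} [AddCommGroup X] [Module (ZMod 2) X]
    (ω : X →ₗ[ZMod 2] X →ₗ[ZMod 2] ZMod 2) (S : Set X) : Prop :=
  ∃ S' : Set X, tEquiv ω S S' ∧ (transGraph ω S').IsTree ∧
    ∃ f : Fin 6 → S', Function.Injective f ∧
      ∀ i j, (transGraph ω S').Adj (f i) (f j) ↔ e6Graph.Adj i j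

/-- the co-boundary map `δ : ⟨V⟩ → X*`, `δ(y)(x) = ω_{⟨V⟩}(y, ∂ x)`,
where `ω_{⟨V⟩}` is the standard inner product making `V` orthonormal. -/
def coboundary {X V : Type*} [AddCommGroup X] [Module (ZMod 2) X] [Fintype V]
    (bd : X →ₗ[ZMod 2] (V → ZMod 2)) (y : V → ZMod 2) : Module.Dual (ZMod 2) X :=
  (∑ v : V, y v • LinearMap.proj v) ∘ₗ bd

/-- the number of one coordinates of `y`. -/
noncomputable def dOne {V : Type*} [Fintype V] (y : V → ZMod 2) : ℕ :=
  (Finset.univ.filter fun v => y v = 1).card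

/-- the number of zero coordinates of `y`. -/
noncomputable def dZero {V : Type*} [Fintype V] (y : V → ZMod 2) : ℕ :=
  (Finset.univ.filter fun v => y v = 0).card

/-- `d(y) = min(d₀(y), d₁(y))`. -/
noncomputable def dFun {V : Type*} [Fintype V] (y : V → ZMod 2) : ℕ :=
  min (dZero y) (dOne y)

set_option linter.unusedSectionVars false

namespace Stmt2Aux

lemma z2 (c : ZMod 2) : c = 0 ∨ c = 1 := by revert c; decide

lemma z2add (c : ZMod 2) : c + c = 0 := by rcases z2 c with rfl | rfl <;> decide

lemma addself {A : Type*} [AddCommGroup A] [Module (ZMod 2) A] (a : A) : a + a = 0 := by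
  have : a + a = ((1 : ZMod 2) + 1) • a := by rw [add_smul, one_smul]
  rw [this, show (1 : ZMod 2) + 1 = 0 by decide, zero_smul]

variable {X : Type*} [AddCommGroup X] [Module (ZMod 2) X]
variable (ω : X →ₗ[ZMod 2] X →ₗ[ZMod 2] ZMod 2)

lemma omega_symm (halt : ∀ x, ω x x = 0) (x y : X) : ω x y = ω y x := by
  have h := halt (x + y)
  simp only [map_add, LinearMap.add_apply, halt] at h
  have : ω x y + ω y x = 0 := by linear_combination h
  rcases z2 (ω x y) with h1 | h1 <;> rcases z2 (ω y x) with h2 | h2 <;>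
    simp [h1, h2] at this ⊢ <;> simp_all

def Rstep (S : Set X) (α α' : Module.Dual (ZMod 2) X) : Prop :=
  ∃ e ∈ S, α' = α + α e • ω e

def Reach (S : Set X) : Module.Dual (ZMod 2) X → Module.Dual (ZMod 2) X → Prop :=
  Relation.ReflTransGen (Rstep ω S)

variable {S : Set X}

lemma rstep_symm (halt : ∀ x, ω x x = 0) : Symmetric (Rstep ω S) := by
  rintro α α' ⟨e, he, rfl⟩
  refine ⟨e, he, ?_⟩
  have h1 : (α + α e • ω e) e = α e := by
    simp [LinearMap.add_apply, LinearMap.smul_apply, halt e, smul_eq_mul]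
  rw [h1, add_assoc, ← add_smul, z2add, zero_smul, add_zero]

lemma reach_symm (halt : ∀ x, ω x x = 0) : Symmetric (Reach ω S) :=
  by
  intro a b h
  induction h with
  | refl => exact Relation.ReflTransGen.refl
  | tail _ hst ih => exact Relation.ReflTransGen.head (rstep_symm ω halt hst) ih

lemma reach_trans {a b c} (h1 : Reach ω S a b) (h2 : Reach ω S b c) : Reach ω S a c :=
  Relation.ReflTransGen.trans h1 h2

/-- the transvection as a permutation -/
def tv (halt : ∀ x, ω x x = 0) (e : X) : Equiv.Perm X where
  toFun x := x + ω x e • e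
  invFun x := x + ω x e • e
  left_inv x := by
    show x + ω x e • e + ω (x + ω x e • e) e • e = x
    have h1 : ω (x + ω x e • e) e = ω x e := by
      simp [map_add, LinearMap.add_apply, map_smul, LinearMap.smul_apply, halt e, smul_eq_mul]
    rw [h1, add_assoc, ← add_smul, z2add, zero_smul, add_zero]
  right_inv x := by
    show x + ω x e • e + ω (x + ω x e • e) e • e = x
    have h1 : ω (x + ω x e • e) e = ω x e := by
      simp [map_add, LinearMap.add_apply, map_smul, LinearMap.smul_apply, halt e, smul_eq_mul]
    rw [h1, add_assoc, ← add_smul, z2add, zero_smul, add_zero]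

lemma tv_mem (halt : ∀ x, ω x x = 0) {e : X} (he : e ∈ S) :
    tv ω halt e ∈ transvectionGroup ω S :=
  Subgroup.subset_closure ⟨e, he, 1, one_ne_zero, fun x => by simp [tv, one_mul]⟩

lemma add_of_mem {g : Equiv.Perm X} (hg : g ∈ transvectionGroup ω S) :
    ∀ x y, g (x + y) = g x + g y := by
  induction hg using Subgroup.closure_induction with
  | mem f hf =>
    obtain ⟨s, _, k, _, hf⟩ := hf
    intro x y
    rw [hf, hf, hf, map_add, LinearMap.add_apply, mul_add, add_smul]
    abel
  | one => intro x y; rfl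
  | mul a b _ _ ha hb => intro x y; simp only [Equiv.Perm.mul_apply, hb, ha]
  | inv a _ ha =>
    intro x y
    apply a.injective
    rw [ha, Equiv.Perm.inv_def, Equiv.apply_symm_apply, Equiv.apply_symm_apply, Equiv.apply_symm_apply]

lemma zero_of_mem {g : Equiv.Perm X} (hg : g ∈ transvectionGroup ω S) : g 0 = 0 := by
  have := add_of_mem ω hg 0 0
  rw [add_zero] at this
  exact (left_eq_add.mp this)

lemma orbit_iff_reach (halt : ∀ x, ω x x = 0) (β γ : Module.Dual (ZMod 2) X) :
    (∃ g ∈ transvectionGroup ω S, ∀ x, γ x = β (g x)) ↔ Reach ω S β γ := by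
  constructor
  · rintro ⟨g, hg, hγ⟩
    have main : ∀ (g : Equiv.Perm X) (hg : g ∈ transvectionGroup ω S)
        (β γ : Module.Dual (ZMod 2) X), (∀ x, γ x = β (g x)) → Reach ω S β γ := by
      intro g hg
      induction hg using Subgroup.closure_induction with
      | mem f hf =>
        intro β γ hc
        obtain ⟨s, hs, k, hk, hf⟩ := hf
        have hk1 : k = 1 := by rcases z2 k with h | h; exact absurd h hk; exact h
        subst hk1
        have : γ = β + β s • ω s := by
          apply LinearMap.ext; intro x
          rw [hc x, hf x, map_add, map_smul]
          simp only [LinearMap.add_apply, LinearMap.smul_apply, smul_eq_mul, one_mul]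
          rw [omega_symm ω halt s x]; ring
        exact Relation.ReflTransGen.single ⟨s, hs, this⟩
      | one =>
        intro β γ hc
        have : γ = β := LinearMap.ext fun x => hc x
        rw [this]
        exact Relation.ReflTransGen.refl
      | mul a b ha hb iha ihb =>
        intro β γ hc
        have hadd := add_of_mem ω ha
        have hzero := zero_of_mem ω ha
        let mid : Module.Dual (ZMod 2) X :=
          { toFun := fun z => β (a z)
            map_add' := fun x y => by
              show β (a (x + y)) = β (a x) + β (a y)
              rw [hadd, map_add]
            map_smul' := fun c x => by
              show β (a (c • x)) = c • β (a x)
              rcases z2 c with rfl | rfl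
              · rw [zero_smul, zero_smul, hzero, map_zero]
              · rw [one_smul, one_smul] }
        have h1 : Reach ω S β mid := iha β mid (fun z => rfl)
        have h2 : Reach ω S mid γ := ihb mid γ (fun z => by
          rw [hc z]; rfl)
        exact reach_trans ω h1 h2
      | inv a ha iha =>
        intro β γ hc
        have : Reach ω S γ β := by
          apply iha γ β
          intro z
          rw [hc (a z), Equiv.Perm.inv_def, Equiv.symm_apply_apply]
        exact reach_symm ω halt this
    exact main g hg β γ hγ
  · intro h
    induction h with
    | refl => exact ⟨1, one_mem _, fun x => rfl⟩
    | tail hab step ih =>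
      obtain ⟨g, hg, hβ⟩ := ih
      obtain ⟨e, he, rfl⟩ := step
      refine ⟨g * tv ω halt e, mul_mem hg (tv_mem ω halt he), fun x => ?_⟩
      rw [Equiv.Perm.mul_apply, ← hβ]
      show _ = _
      rw [show (tv ω halt e) x = x + ω x e • e from rfl]
      rw [map_add, map_smul]
      simp only [LinearMap.add_apply, LinearMap.smul_apply, smul_eq_mul]
      rw [omega_symm ω halt e x]; ring

-- === chunk2 ===

variable {X V : Type*} [AddCommGroup X] [Module (ZMod 2) X] [Fintype V] [DecidableEq V]
variable (bd : X →ₗ[ZMod 2] (V → ZMod 2))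

/-- indicator of a single vertex -/
def sgl (a : V) : V → ZMod 2 := Pi.single a 1

lemma sgl_apply (a v : V) : sgl a v = if v = a then 1 else 0 := Pi.single_apply a 1 v



lemma cob_apply (y : V → ZMod 2) (x : X) :
    coboundary bd y x = ∑ v : V, y v * bd x v := by
  simp [coboundary, LinearMap.sum_apply, LinearMap.smul_apply, smul_eq_mul]

lemma cob_add (y z : V → ZMod 2) :
    coboundary bd (y + z) = coboundary bd y + coboundary bd z := by
  apply LinearMap.ext; intro x
  simp only [cob_apply, LinearMap.add_apply, Pi.add_apply, add_mul]
  rw [Finset.sum_add_distrib]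

lemma ssm (a c : V) :
    ∑ v : V, sgl a v * sgl c v = (if a = c then (1:ZMod 2) else 0) := by
  rw [Finset.sum_eq_single a]
  · rcases eq_or_ne a c with rfl | h
    · simp [sgl]
    · simp [sgl_apply, h, Ne.symm h]
  · intro v _ hv
    rcases eq_or_ne v c with rfl | h
    · simp [sgl_apply, hv]
    · simp [sgl_apply, h]
  · intro h; exact absurd (Finset.mem_univ a) h

lemma sum_single_mul (a b c d : V) :
    ∑ v : V, (sgl a v + sgl b v) *
      (sgl c v + sgl d v) =
    ((if a = c then (1:ZMod 2) else 0)) + ((if a = d then (1:ZMod 2) else 0)) +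
      (((if b = c then (1:ZMod 2) else 0)) + ((if b = d then (1:ZMod 2) else 0))) := by
  have : ∀ v : V, (sgl a v + sgl b v) *
      (sgl c v + sgl d v) =
      sgl a v * sgl c v + sgl a v * sgl d v
      + (sgl b v * sgl c v +
         sgl b v * sgl d v) := by
    intro v; ring
  simp only [this, Finset.sum_add_distrib, ssm]


lemma sgl_sum (a : V) : ∑ v : V, sgl a v = 1 := by
  simp only [sgl_apply]
  rw [Finset.sum_ite_eq' Finset.univ a (fun _ => (1 : ZMod 2))]
  simp

variable {S : Set X}

lemma bd_edge (v₁ v₂ : S → V)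
    (hbd : ∀ e : S, bd e.1 = Pi.single (v₁ e) 1 + Pi.single (v₂ e) 1) (e : S) :
    bd e.1 = sgl (v₁ e) + sgl (v₂ e) := hbd e

lemma omega_eq (ω : X →ₗ[ZMod 2] X →ₗ[ZMod 2] ZMod 2) (halt : ∀ x, ω x x = 0)
    (hind : LinearIndependent (ZMod 2) ((↑) : S → X))
    (hspan : Submodule.span (ZMod 2) S = ⊤)
    (v₁ v₂ : S → V) (hend : ∀ e, v₁ e ≠ v₂ e)
    (hline : ∀ e f : S, e ≠ f → (ω e.1 f.1 = 1 ↔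
      Xor' (v₁ e = v₁ f ∨ v₁ e = v₂ f) (v₂ e = v₁ f ∨ v₂ e = v₂ f)))
    (hbd : ∀ e : S, bd e.1 = Pi.single (v₁ e) 1 + Pi.single (v₂ e) 1) :
    ∀ x y, ω x y = ∑ v : V, bd x v * bd y v := by
  let B : X →ₗ[ZMod 2] X →ₗ[ZMod 2] ZMod 2 := LinearMap.mk₂ (ZMod 2)
    (fun x y => ∑ v : V, bd x v * bd y v)
    (fun m n y => by
      simp only [map_add, Pi.add_apply, add_mul]
      rw [Finset.sum_add_distrib])
    (fun c m y => by
      simp only [map_smul, Pi.smul_apply, smul_eq_mul, Finset.mul_sum, mul_assoc])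
    (fun m y z => by
      simp only [map_add, Pi.add_apply, mul_add]
      rw [Finset.sum_add_distrib])
    (fun c m y => by
      simp only [map_smul, Pi.smul_apply, smul_eq_mul, Finset.mul_sum, mul_left_comm])
  have key : ω = B := by
    let b : Module.Basis S (ZMod 2) X := Module.Basis.mk hind (by rw [Subtype.range_coe, hspan])
    apply b.ext; intro i
    apply b.ext; intro j
    have hb : ∀ i : S, b i = i.1 := fun i => Module.Basis.mk_apply hind _ i
    rw [hb, hb]
    show ω i.1 j.1 = ∑ v : V, bd i.1 v * bd j.1 v
    rw [bd_edge bd v₁ v₂ hbd i, bd_edge bd v₁ v₂ hbd j]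
    simp only [Pi.add_apply]
    rw [sum_single_mul]
    rcases eq_or_ne i j with rfl | hij
    · rw [halt]
      have h2 := hend i
      simp only [if_pos rfl, if_neg h2, if_neg (Ne.symm h2)]
      decide
    · have hx := hline i j hij
      have e1 := hend i; have e2 := hend j
      rcases z2 (ω i.1 j.1) with h0 | h1
      · rw [h0]
        have hnx : ¬ Xor' (v₁ i = v₁ j ∨ v₁ i = v₂ j) (v₂ i = v₁ j ∨ v₂ i = v₂ j) := by
          intro hxx
          rw [hx.mpr hxx] at h0
          exact one_ne_zero h0
        by_cases hP : v₁ i = v₁ j ∨ v₁ i = v₂ j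
        · have hQ : v₂ i = v₁ j ∨ v₂ i = v₂ j := by
            by_contra hq
            exact hnx (Or.inl ⟨hP, hq⟩)
          rcases hP with h1 | h2 <;> rcases hQ with h3 | h4
          · exact absurd (h1.trans h3.symm) e1
          · rw [if_pos h1, if_pos h4, if_neg (fun hh => e2 (h1.symm.trans hh)),
              if_neg (fun hh => e1 (h1.trans hh.symm))]
            decide
          · rw [if_pos h2, if_pos h3, if_neg (fun hh => e2 (hh.symm.trans h2)),
              if_neg (fun hh => e2 (h3.symm.trans hh))]
            decide
          · exact absurd (h2.trans h4.symm) e1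
        · have hQ : ¬ (v₂ i = v₁ j ∨ v₂ i = v₂ j) := by
            intro hq
            exact hnx (Or.inr ⟨hq, hP⟩)
          rw [if_neg (fun hh => hP (Or.inl hh)), if_neg (fun hh => hP (Or.inr hh)),
            if_neg (fun hh => hQ (Or.inl hh)), if_neg (fun hh => hQ (Or.inr hh))]
          decide
      · rw [h1]
        rcases hx.mp h1 with ⟨hP, hnQ⟩ | ⟨hQ, hnP⟩
        · obtain ⟨h3', h4'⟩ := not_or.mp hnQ
          rcases hP with h1' | h2'
          · rw [if_pos h1', if_neg (fun hh => e2 (h1'.symm.trans hh)), if_neg h3', if_neg h4']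
            decide
          · rw [if_pos h2', if_neg (fun hh => e2 (hh.symm.trans h2')), if_neg h3', if_neg h4']
            decide
        · obtain ⟨h1', h2'⟩ := not_or.mp hnP
          rcases hQ with h3' | h4'
          · rw [if_pos h3', if_neg (fun hh => e2 (h3'.symm.trans hh)), if_neg h1', if_neg h2']
            decide
          · rw [if_pos h4', if_neg (fun hh : v₂ i = v₁ j => e2 (hh.symm.trans h4')), if_neg h1', if_neg h2']
            decide
  intro x y
  rw [key]
  rfl

end Stmt2Aux


-- === chunk3: swap dynamics ===

noncomputable def dOne' {V : Type*} [Fintype V] (y : V → ZMod 2) : ℕ :=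
  (Finset.univ.filter fun v => y v = 1).card

namespace Stmt2Aux

variable {X V : Type*} [AddCommGroup X] [Module (ZMod 2) X] [Fintype V] [DecidableEq V]
variable (ω : X →ₗ[ZMod 2] X →ₗ[ZMod 2] ZMod 2) {S : Set X}
variable (bd : X →ₗ[ZMod 2] (V → ZMod 2))

lemma cob_smul (c : ZMod 2) (z : V → ZMod 2) :
    coboundary bd (c • z) = c • coboundary bd z := by
  apply LinearMap.ext; intro x
  simp only [cob_apply, LinearMap.smul_apply, Pi.smul_apply, smul_eq_mul, Finset.mul_sum,
    mul_assoc]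

lemma sum_mul_sgl (y : V → ZMod 2) (a : V) : ∑ v : V, y v * sgl a v = y a := by
  simp only [sgl_apply, mul_ite, mul_one, mul_zero]
  rw [Finset.sum_ite_eq' Finset.univ a y]
  simp

variable (v₁ v₂ : S → V)

lemma cob_edge (hbd : ∀ e : S, bd e.1 = Pi.single (v₁ e) 1 + Pi.single (v₂ e) 1)
    (y : V → ZMod 2) (e : S) :
    coboundary bd y e.1 = y (v₁ e) + y (v₂ e) := by
  rw [cob_apply, bd_edge bd v₁ v₂ hbd e]
  simp only [Pi.add_apply, mul_add]
  rw [Finset.sum_add_distrib, sum_mul_sgl, sum_mul_sgl]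

/-- swap two coordinates -/
def swF (a b : V) (y : V → ZMod 2) : V → ZMod 2 := y + (y a + y b) • (sgl a + sgl b)

lemma swF_comp (a b : V) (y : V → ZMod 2) : swF a b y = y ∘ ⇑(Equiv.swap a b) := by
  rcases eq_or_ne a b with rfl | hab
  · funext v
    simp only [swF, Pi.add_apply, Pi.smul_apply, smul_eq_mul, Function.comp_apply,
      Equiv.swap_self, Equiv.coe_refl, id_eq]
    rw [z2add (y a)]
    ring
  · funext v
    simp only [swF, Pi.add_apply, Pi.smul_apply, smul_eq_mul, Function.comp_apply, sgl_apply]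
    rcases eq_or_ne v a with rfl | hva
    · rw [Equiv.swap_apply_left, if_pos rfl, if_neg hab]
      rcases z2 (y v) with h | h <;> rcases z2 (y b) with h' | h' <;> rw [h, h'] <;> decide
    · rcases eq_or_ne v b with rfl | hvb
      · rw [Equiv.swap_apply_right, if_neg (Ne.symm hab), if_pos rfl]
        rcases z2 (y a) with h | h <;> rcases z2 (y v) with h' | h' <;> rw [h, h'] <;> decide
      · rw [Equiv.swap_apply_of_ne_of_ne hva hvb, if_neg hva, if_neg hvb]
        ring
  
lemma dOne'_comp (y : V → ZMod 2) (σ : Equiv.Perm V) : dOne' (y ∘ ⇑σ) = dOne' y := by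
  apply Finset.card_bij (fun v _ => σ v)
  · intro a ha
    simp only [Finset.mem_filter, Finset.mem_univ, true_and] at ha ⊢
    exact ha
  · intro a _ b _ hab
    exact σ.injective hab
  · intro b hb
    refine ⟨σ.symm b, ?_, by simp⟩
    simp only [Finset.mem_filter, Finset.mem_univ, true_and, Function.comp_apply,
      Equiv.apply_symm_apply] at hb ⊢
    exact hb

lemma step_state (hω : ∀ x, ω x = coboundary bd (bd x)) (ρ : Module.Dual (ZMod 2) X)
    (e : S) (y : V → ZMod 2) :
    Rstep ω S (coboundary bd y + ρ)
      (coboundary bd (y + (coboundary bd y e.1 + ρ e.1) • bd e.1) + ρ) := by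
  refine ⟨e.1, e.2, ?_⟩
  rw [cob_add, cob_smul, hω e.1]
  rw [show (coboundary bd y + ρ) e.1 = coboundary bd y e.1 + ρ e.1 from rfl]
  abel

section Tree

variable (ρ : Module.Dual (ZMod 2) X)
variable (r : V) (p : V → V) (wt : V → ℕ) (ep : ∀ v : V, v ≠ r → S)

lemma swap_base (hω : ∀ x, ω x = coboundary bd (bd x))
    (hbd : ∀ e : S, bd e.1 = Pi.single (v₁ e) 1 + Pi.single (v₂ e) 1)
    (hep : ∀ v (h : v ≠ r), (v₁ (ep v h) = v ∧ v₂ (ep v h) = p v) ∨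
      (v₁ (ep v h) = p v ∧ v₂ (ep v h) = v))
    (hρ : ∀ v (h : v ≠ r), ρ (ep v h).1 = 0)
    (v : V) (h : v ≠ r) (y : V → ZMod 2) :
    Reach ω S (coboundary bd y + ρ) (coboundary bd (y ∘ ⇑(Equiv.swap v (p v))) + ρ) := by
  have hs := step_state ω bd hω ρ (ep v h) y
  rw [cob_edge bd v₁ v₂ hbd y (ep v h), hρ v h, add_zero] at hs
  apply Relation.ReflTransGen.single
  rcases hep v h with ⟨h1, h2⟩ | ⟨h1, h2⟩
  · rw [← swF_comp]
    have : swF v (p v) y = y + (y (v₁ (ep v h)) + y (v₂ (ep v h))) • bd (ep v h).1 := by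
      rw [swF, h1, h2, bd_edge bd v₁ v₂ hbd, h1, h2]
    rw [this]
    exact hs
  · rw [Equiv.swap_comm, ← swF_comp]
    have : swF (p v) v y = y + (y (v₁ (ep v h)) + y (v₂ (ep v h))) • bd (ep v h).1 := by
      rw [swF, h1, h2, bd_edge bd v₁ v₂ hbd, h1, h2]
    rw [this]
    exact hs

lemma swap_reach (halt : ∀ x, ω x x = 0) (hω : ∀ x, ω x = coboundary bd (bd x))
    (hbd : ∀ e : S, bd e.1 = Pi.single (v₁ e) 1 + Pi.single (v₂ e) 1)
    (hwt : ∀ v (h : v ≠ r), wt (p v) < wt v)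
    (hep : ∀ v (h : v ≠ r), (v₁ (ep v h) = v ∧ v₂ (ep v h) = p v) ∨
      (v₁ (ep v h) = p v ∧ v₂ (ep v h) = v))
    (hρ : ∀ v (h : v ≠ r), ρ (ep v h).1 = 0) :
    ∀ (n : ℕ) (a b : V) (y : V → ZMod 2), wt a + wt b ≤ n →
      Reach ω S (coboundary bd y + ρ) (coboundary bd (y ∘ ⇑(Equiv.swap a b)) + ρ) := by
  intro n
  induction n using Nat.strong_induction_on with
  | _ n ih =>
    -- helper for the case a ≠ r
    have main : ∀ a b (y : V → ZMod 2), wt a + wt b ≤ n → a ≠ b → a ≠ r →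
        Reach ω S (coboundary bd y + ρ) (coboundary bd (y ∘ ⇑(Equiv.swap a b)) + ρ) := by
      intro a b y hn hab har
      by_cases hb : b = p a
      · subst hb
        exact swap_base ω bd v₁ v₂ ρ r p ep hω hbd hep hρ a har y
      · set c := p a with hc
        have hca : c ≠ a := fun hh => by
          have := hwt a har; rw [← hc, hh] at this; exact Nat.lt_irrefl _ this
        have hcb : c ≠ b := fun hh => hb hh.symm
        have hid : Equiv.swap c a * Equiv.swap b c * Equiv.swap c a = Equiv.swap a b :=
          Equiv.swap_mul_swap_mul_swap (Ne.symm hcb) (Ne.symm hab)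
        have hcomp : y ∘ ⇑(Equiv.swap a b) =
            ((y ∘ ⇑(Equiv.swap c a)) ∘ ⇑(Equiv.swap b c)) ∘ ⇑(Equiv.swap c a) := by
          rw [← hid, Equiv.Perm.coe_mul, Equiv.Perm.coe_mul]
          rfl
        rw [hcomp]
        have s1 : Reach ω S (coboundary bd y + ρ)
            (coboundary bd (y ∘ ⇑(Equiv.swap c a)) + ρ) := by
          rw [Equiv.swap_comm]
          exact swap_base ω bd v₁ v₂ ρ r p ep hω hbd hep hρ a har y
        have s2 : Reach ω S (coboundary bd (y ∘ ⇑(Equiv.swap c a)) + ρ)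
            (coboundary bd ((y ∘ ⇑(Equiv.swap c a)) ∘ ⇑(Equiv.swap b c)) + ρ) := by
          have hlt : wt b + wt c < n := by
            have h9 := hwt a har
            rw [← hc] at h9
            omega
          have := ih (wt b + wt c) hlt b c (y ∘ ⇑(Equiv.swap c a)) le_rfl
          exact this
        have s3 : Reach ω S (coboundary bd ((y ∘ ⇑(Equiv.swap c a)) ∘ ⇑(Equiv.swap b c)) + ρ)
            (coboundary bd (((y ∘ ⇑(Equiv.swap c a)) ∘ ⇑(Equiv.swap b c)) ∘ ⇑(Equiv.swap c a)) + ρ) := by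
          rw [Equiv.swap_comm]
          exact swap_base ω bd v₁ v₂ ρ r p ep hω hbd hep hρ a har _
        exact reach_trans ω (reach_trans ω s1 s2) s3
    intro a b y hn
    rcases eq_or_ne a b with rfl | hab
    · rw [Equiv.swap_self]
      rw [show y ∘ ⇑(Equiv.refl V) = y from rfl]
      exact Relation.ReflTransGen.refl
    · by_cases har : a = r
      · have hbr : b ≠ r := fun hh => hab (by rw [hh, har])
        rw [Equiv.swap_comm]
        exact main b a y (by omega) (Ne.symm hab) hbr
      · exact main a b y hn hab har

end Tree

end Stmt2Aux

-- === chunk4: perm and weight reach ===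


namespace Stmt2Aux

variable {X V : Type*} [AddCommGroup X] [Module (ZMod 2) X] [Fintype V] [DecidableEq V]
variable (ω : X →ₗ[ZMod 2] X →ₗ[ZMod 2] ZMod 2) {S : Set X}
variable (bd : X →ₗ[ZMod 2] (V → ZMod 2))

lemma dOne_eq (y : V → ZMod 2) : dOne y = dOne' y := rfl

lemma dOne_comp (y : V → ZMod 2) (σ : Equiv.Perm V) : dOne (y ∘ ⇑σ) = dOne y :=
  dOne'_comp y σ

lemma dZero_eq (y : V → ZMod 2) : dZero y = Fintype.card V - dOne y := by
  have h : Finset.univ.filter (fun v => y v = 0) =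
      Finset.univ \ Finset.univ.filter (fun v => y v = 1) := by
    ext v
    simp only [Finset.mem_filter, Finset.mem_univ, true_and, Finset.mem_sdiff]
    rcases z2 (y v) with h | h <;> rw [h] <;> simp <;> decide
  rw [dZero, h, Finset.card_sdiff_of_subset (Finset.subset_univ _), Finset.card_univ]
  rfl

lemma dOne_le (y : V → ZMod 2) : dOne y ≤ Fintype.card V := by
  rw [dOne, ← Finset.card_univ]
  exact Finset.card_filter_le _ _

/-- indicator function of a finset -/
def indF (s : Finset V) : V → ZMod 2 := fun v => if v ∈ s then 1 else 0

lemma dOne_indF (s : Finset V) : dOne (indF s) = s.card := by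
  rw [dOne]
  congr 1
  ext v
  simp only [Finset.mem_filter, Finset.mem_univ, true_and]; simp only [indF]
  split_ifs with h <;> simp [h] <;> decide

lemma dOne_add_ones (z : V → ZMod 2) :
    dOne (z + fun _ => 1) = Fintype.card V - dOne z := by
  rw [← dZero_eq, dOne, dZero]
  congr 1
  ext v
  simp only [Finset.mem_filter, Finset.mem_univ, true_and, Pi.add_apply]
  rcases z2 (z v) with h | h <;> rw [h] <;> decide

lemma dOne_cast (w : V → ZMod 2) : ((dOne w : ZMod 2)) = ∑ v : V, w v := by
  rw [← Finset.sum_filter_add_sum_filter_not Finset.univ (fun v => w v = 1) w]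
  have h1 : ∑ v ∈ Finset.univ.filter (fun v => w v = 1), w v =
      ∑ _v ∈ Finset.univ.filter (fun v => w v = 1), (1 : ZMod 2) :=
    Finset.sum_congr rfl (fun v hv => by
      simp only [Finset.mem_filter] at hv; rw [hv.2])
  have h2 : ∑ v ∈ Finset.univ.filter (fun v => ¬ w v = 1), w v = 0 :=
    Finset.sum_eq_zero (fun v hv => by
      simp only [Finset.mem_filter] at hv
      rcases z2 (w v) with h | h
      · exact h
      · exact absurd h hv.2)
  rw [h1, h2, Finset.sum_const, add_zero, nsmul_eq_mul, mul_one, dOne]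

section Tree

variable (v₁ v₂ : S → V)
variable (ρ : Module.Dual (ZMod 2) X)
variable (r : V) (p : V → V) (wt : V → ℕ) (ep : ∀ v : V, v ≠ r → S)
variable (halt : ∀ x, ω x x = 0) (hω : ∀ x, ω x = coboundary bd (bd x))
variable (hbd : ∀ e : S, bd e.1 = Pi.single (v₁ e) 1 + Pi.single (v₂ e) 1)
variable (hwt : ∀ v (h : v ≠ r), wt (p v) < wt v)
variable (hep : ∀ v (h : v ≠ r), (v₁ (ep v h) = v ∧ v₂ (ep v h) = p v) ∨
      (v₁ (ep v h) = p v ∧ v₂ (ep v h) = v))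
variable (hρ : ∀ v (h : v ≠ r), ρ (ep v h).1 = 0)

include halt hω hbd hwt hep hρ in
lemma perm_reach :
    ∀ (n : ℕ) (y z : V → ZMod 2),
      (Finset.univ.filter fun v => y v ≠ z v).card ≤ n → dOne y = dOne z →
      Reach ω S (coboundary bd y + ρ) (coboundary bd z + ρ) := by
  intro n
  induction n using Nat.strong_induction_on with
  | _ n ih =>
  intro y z hcard hd
  by_cases hdiff : (Finset.univ.filter fun v => y v ≠ z v) = ∅
  · have : y = z := by
      funext v
      by_contra hv
      have hmem : v ∈ Finset.univ.filter fun v => y v ≠ z v := by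
        simp only [Finset.mem_filter, Finset.mem_univ, true_and]; exact hv
      rw [hdiff] at hmem
      exact absurd hmem (Finset.notMem_empty v)
    rw [this]
    exact Relation.ReflTransGen.refl
  · have hne01 : (0 : ZMod 2) ≠ 1 := by decide
    have hsplit : ∀ w w' : V → ZMod 2,
        (Finset.univ.filter fun v => w v = 1) =
        (Finset.univ.filter fun v => w v = 1 ∧ w' v = 1) ∪
        (Finset.univ.filter fun v => w v = 1 ∧ w' v = 0) := by
      intro w w'
      ext v
      simp only [Finset.mem_filter, Finset.mem_univ, true_and, Finset.mem_union]
      rcases z2 (w' v) with h | h <;> rw [h] <;> constructor <;> intro hh <;> tauto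
    have hdisj : ∀ w w' : V → ZMod 2,
        Disjoint (Finset.univ.filter fun v => w v = 1 ∧ w' v = 1)
          (Finset.univ.filter fun v => w v = 1 ∧ w' v = 0) := by
      intro w w'
      rw [Finset.disjoint_left]
      intro v hv hv'
      simp only [Finset.mem_filter, Finset.mem_univ, true_and] at hv hv'
      rw [hv.2] at hv'
      exact hne01 hv'.2.symm
    have hcy : dOne y = (Finset.univ.filter fun v => y v = 1 ∧ z v = 1).card +
        (Finset.univ.filter fun v => y v = 1 ∧ z v = 0).card := by
      rw [dOne, hsplit y z, Finset.card_union_of_disjoint (hdisj y z)]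
    have hcz : dOne z = (Finset.univ.filter fun v => y v = 1 ∧ z v = 1).card +
        (Finset.univ.filter fun v => z v = 1 ∧ y v = 0).card := by
      rw [dOne, hsplit z y, Finset.card_union_of_disjoint (hdisj z y)]
      congr 2
      ext v
      simp only [Finset.mem_filter, Finset.mem_univ, true_and]
      tauto
    have hcards : (Finset.univ.filter fun v => y v = 1 ∧ z v = 0).card =
        (Finset.univ.filter fun v => z v = 1 ∧ y v = 0).card := by omega
    -- pick a and b
    have hAne : (Finset.univ.filter fun v => y v = 1 ∧ z v = 0).Nonempty := by
      rw [Finset.nonempty_iff_ne_empty]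
      intro hA
      have hB : (Finset.univ.filter fun v => z v = 1 ∧ y v = 0) = ∅ :=
        Finset.card_eq_zero.mp (by rw [← hcards, hA, Finset.card_empty])
      apply hdiff
      ext v
      simp only [Finset.mem_filter, Finset.mem_univ, true_and, Finset.notMem_empty,
        iff_false]
      intro hv
      rcases z2 (y v) with h | h <;> rcases z2 (z v) with h' | h'
      · exact hv (h.trans h'.symm)
      · have : v ∈ Finset.univ.filter fun v => z v = 1 ∧ y v = 0 := by
          simp only [Finset.mem_filter, Finset.mem_univ, true_and]; exact ⟨h', h⟩
        rw [hB] at this; exact absurd this (Finset.notMem_empty v)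
      · have : v ∈ Finset.univ.filter fun v => y v = 1 ∧ z v = 0 := by
          simp only [Finset.mem_filter, Finset.mem_univ, true_and]; exact ⟨h, h'⟩
        rw [hA] at this; exact absurd this (Finset.notMem_empty v)
      · exact hv (h.trans h'.symm)
    obtain ⟨a, ha⟩ := hAne
    simp only [Finset.mem_filter, Finset.mem_univ, true_and] at ha
    have hBne : (Finset.univ.filter fun v => z v = 1 ∧ y v = 0).Nonempty := by
      rw [← Finset.card_pos, ← hcards, Finset.card_pos]
      exact ⟨a, by simp only [Finset.mem_filter, Finset.mem_univ, true_and]; exact ha⟩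
    obtain ⟨b, hb⟩ := hBne
    simp only [Finset.mem_filter, Finset.mem_univ, true_and] at hb
    have hab : a ≠ b := by
      intro hh
      rw [hh, hb.2] at ha
      exact hne01 ha.1
    set y' := y ∘ ⇑(Equiv.swap a b) with hy'
    have step1 : Reach ω S (coboundary bd y + ρ) (coboundary bd y' + ρ) :=
      swap_reach ω bd v₁ v₂ ρ r p wt ep halt hω hbd hwt hep hρ (wt a + wt b) a b y le_rfl
    have hy'a : y' a = 0 := by
      rw [hy']
      simp only [Function.comp_apply, Equiv.swap_apply_left]
      exact hb.2
    have hy'b : y' b = 1 := by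
      rw [hy']
      simp only [Function.comp_apply, Equiv.swap_apply_right]
      exact ha.1
    have hsub : (Finset.univ.filter fun v => y' v ≠ z v) ⊆
        (Finset.univ.filter fun v => y v ≠ z v).erase a := by
      intro v hv
      simp only [Finset.mem_filter, Finset.mem_univ, true_and] at hv
      rcases eq_or_ne v a with rfl | hva
      · exact absurd (hy'a.trans ha.2.symm) hv
      · rcases eq_or_ne v b with rfl | hvb
        · exact absurd (hy'b.trans hb.1.symm) hv
        · rw [Finset.mem_erase]
          refine ⟨hva, ?_⟩
          simp only [Finset.mem_filter, Finset.mem_univ, true_and]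
          rw [hy'] at hv
          simp only [Function.comp_apply, Equiv.swap_apply_of_ne_of_ne hva hvb] at hv
          exact hv
    have hcard' : (Finset.univ.filter fun v => y' v ≠ z v).card <
        (Finset.univ.filter fun v => y v ≠ z v).card := by
      have h1 := Finset.card_le_card hsub
      have h2 : a ∈ (Finset.univ.filter fun v => y v ≠ z v) := by
        simp only [Finset.mem_filter, Finset.mem_univ, true_and]
        rw [ha.1, ha.2]
        decide
      have h3 := Finset.card_erase_of_mem h2
      have h4 : 0 < (Finset.univ.filter fun v => y v ≠ z v).card :=
        Finset.card_pos.mpr ⟨a, h2⟩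
      omega
    have hd' : dOne y' = dOne z := by rw [hy', dOne_comp]; exact hd
    have step2 : Reach ω S (coboundary bd y' + ρ) (coboundary bd z + ρ) := by
      refine ih ((Finset.univ.filter fun v => y' v ≠ z v).card) (by omega) y' z le_rfl hd'
    exact reach_trans ω step1 step2

include halt hω hbd hwt hep hρ in
lemma weight_reach (h0 : S) (hρ1 : ρ h0.1 = 1) (hAB : v₁ h0 ≠ v₂ h0) :
    ∀ (n : ℕ) (y z : V → ZMod 2), dOne y ≤ dOne z → dOne z - dOne y ≤ n →
      dOne y % 2 = dOne z % 2 →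
      Reach ω S (coboundary bd y + ρ) (coboundary bd z + ρ) := by
  intro n
  induction n using Nat.strong_induction_on with
  | _ n ih =>
  intro y z hle hn hpar
  rcases eq_or_lt_of_le hle with heq | hlt
  · exact perm_reach ω bd v₁ v₂ ρ r p wt ep halt hω hbd hwt hep hρ _ y z le_rfl heq
  · have h2 : dOne y + 2 ≤ dOne z := by omega
    set A := v₁ h0 with hA
    set B := v₂ h0 with hB
    have hzle : dOne z ≤ Fintype.card V := dOne_le z
    have hcardAB : ({A, B} : Finset V).card = 2 := by
      rw [Finset.card_insert_of_notMem (by simp [hAB]), Finset.card_singleton]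
    have hcsd : (Finset.univ \ {A, B} : Finset V).card = Fintype.card V - 2 := by
      rw [Finset.card_sdiff_of_subset (Finset.subset_univ _), Finset.card_univ, hcardAB]
    obtain ⟨S₀, hS₀sub, hS₀card⟩ := Finset.exists_subset_card_eq
      (show dOne y ≤ (Finset.univ \ {A, B} : Finset V).card by omega)
    have hAS₀ : A ∉ S₀ := fun hh => by
      have h9 := hS₀sub hh
      simp at h9
    have hBS₀ : B ∉ S₀ := fun hh => by
      have h9 := hS₀sub hh
      simp at h9
    have step1 : Reach ω S (coboundary bd y + ρ) (coboundary bd (indF S₀) + ρ) := by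
      refine perm_reach ω bd v₁ v₂ ρ r p wt ep halt hω hbd hwt hep hρ _ y (indF S₀)
        le_rfl ?_
      rw [dOne_indF, hS₀card]
    have hstep : Rstep ω S (coboundary bd (indF S₀) + ρ)
        (coboundary bd (indF S₀ + (coboundary bd (indF S₀) h0.1 + ρ h0.1) • bd h0.1) + ρ) :=
      step_state ω bd hω ρ h0 (indF S₀)
    have hcoeff : coboundary bd (indF S₀) h0.1 + ρ h0.1 = 1 := by
      rw [cob_edge bd v₁ v₂ hbd (indF S₀) h0, hρ1, ← hA, ← hB]
      have h5 : indF S₀ A = 0 := by rw [indF, if_neg hAS₀]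
      have h6 : indF S₀ B = 0 := by rw [indF, if_neg hBS₀]
      rw [h5, h6]
      decide
    set S₁ := insert A (insert B S₀) with hS₁
    have hind : indF S₀ + (coboundary bd (indF S₀) h0.1 + ρ h0.1) • bd h0.1 = indF S₁ := by
      rw [hcoeff, one_smul, bd_edge bd v₁ v₂ hbd h0, ← hA, ← hB]
      funext v
      simp only [Pi.add_apply, indF, sgl_apply, hS₁, Finset.mem_insert, Finset.mem_singleton]
      rcases eq_or_ne v A with rfl | hvA
      · rw [if_neg hAS₀, if_pos rfl, if_neg hAB,
          if_pos (Or.inl rfl)]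
        decide
      · rcases eq_or_ne v B with rfl | hvB
        · rw [if_neg hBS₀, if_neg hvA, if_pos rfl, if_pos (Or.inr (Or.inl rfl))]
          decide
        · rw [if_neg hvA, if_neg hvB]
          by_cases hv : v ∈ S₀
          · rw [if_pos hv, if_pos (Or.inr (Or.inr hv))]
            decide
          · rw [if_neg hv, if_neg (fun hh => by
              rcases hh with hh | hh | hh
              · exact hvA hh
              · exact hvB hh
              · exact hv hh)]
            decide
    have hS₁card : S₁.card = dOne y + 2 := by
      rw [hS₁, Finset.card_insert_of_notMem (by
          simp only [Finset.mem_insert]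
          push_neg
          exact ⟨hAB, hAS₀⟩),
        Finset.card_insert_of_notMem hBS₀, hS₀card]
    have step2 : Reach ω S (coboundary bd (indF S₀) + ρ) (coboundary bd (indF S₁) + ρ) := by
      apply Relation.ReflTransGen.single
      rw [← hind]
      exact hstep
    have step3 : Reach ω S (coboundary bd (indF S₁) + ρ) (coboundary bd z + ρ) := by
      refine ih (dOne z - dOne (indF S₁)) ?_ (indF S₁) z ?_ le_rfl ?_ <;>
        rw [dOne_indF, hS₁card] <;> omega
    exact reach_trans ω (reach_trans ω step1 step2) step3

end Tree

end Stmt2Aux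

-- === chunk5: invariants, tree, pot ===


/-- tree potential -/
noncomputable def pot {V : Type*} [DecidableEq V] (r : V) (p : V → V) (wt : V → ℕ)
    (hp : ∀ v, v ≠ r → wt (p v) < wt v) (val : V → ZMod 2) (v : V) : ZMod 2 :=
  if h : v = r then 0 else pot r p wt hp val (p v) + val v
termination_by wt v
decreasing_by exact hp v h

lemma pot_ne {V : Type*} [DecidableEq V] (r : V) (p : V → V) (wt : V → ℕ)
    (hp : ∀ v, v ≠ r → wt (p v) < wt v) (val : V → ZMod 2) (v : V) (h : v ≠ r) :
    pot r p wt hp val v = pot r p wt hp val (p v) + val v := by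
  rw [pot]
  exact dif_neg h

namespace Stmt2Aux

lemma z2aca (a c : ZMod 2) : a + c + a = c := by
  rcases z2 a with rfl | rfl <;> rcases z2 c with rfl | rfl <;> decide

lemma tree_exists {V : Type*} [DecidableEq V] (Γ : SimpleGraph V) (hc : Γ.Connected) :
    ∃ (r : V) (p : V → V) (wt : V → ℕ),
      ∀ v, v ≠ r → wt (p v) < wt v ∧ Γ.Adj v (p v) := by
  have hne : Nonempty V := hc.nonempty
  obtain ⟨r⟩ := hne
  have key : ∀ v, v ≠ r → ∃ u, Γ.Adj v u ∧ Γ.dist u r < Γ.dist v r := by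
    intro v hv
    obtain ⟨wlk, hlen⟩ := hc.exists_walk_length_eq_dist v r
    cases wlk with
    | nil => exact absurd rfl hv
    | @cons _ u _ hadj q =>
      refine ⟨u, hadj, ?_⟩
      have h1 := SimpleGraph.dist_le q
      rw [SimpleGraph.Walk.length_cons] at hlen
      have h2 : 0 < Γ.dist v r := hc.pos_dist_of_ne hv
      omega
  refine ⟨r, fun v => if h : v = r then v else (key v h).choose, fun v => Γ.dist v r, ?_⟩
  intro v hv
  have spec := (key v hv).choose_spec
  constructor
  · simp only [dif_neg hv]
    exact spec.2
  · simp only [dif_neg hv]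
    exact spec.1

variable {X V : Type*} [AddCommGroup X] [Module (ZMod 2) X] [Fintype V] [DecidableEq V]
variable (ω : X →ₗ[ZMod 2] X →ₗ[ZMod 2] ZMod 2) {S : Set X}
variable (bd : X →ₗ[ZMod 2] (V → ZMod 2))
variable (v₁ v₂ : S → V)

lemma reach_range (β γ : Module.Dual (ZMod 2) X) (h : Reach ω S β γ) :
    γ - β ∈ LinearMap.range ω := by
  induction h with
  | refl => rw [sub_self]; exact zero_mem _
  | @tail b c hab hbc ih =>
    obtain ⟨e, he, rfl⟩ := hbc
    have heq : b + b e • ω e - β = (b - β) + b e • ω e := by abel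
    rw [heq]
    exact add_mem ih (Submodule.smul_mem _ _ (LinearMap.mem_range_self ω e))

lemma reach_cut (hω : ∀ x, ω x = coboundary bd (bd x))
    (hbd : ∀ e : S, bd e.1 = Pi.single (v₁ e) 1 + Pi.single (v₂ e) 1)
    (β γ : Module.Dual (ZMod 2) X) (h : Reach ω S β γ) :
    ∀ y, coboundary bd y = β → ∃ z, coboundary bd z = γ ∧ dOne z = dOne y := by
  induction h with
  | refl => exact fun y hy => ⟨y, hy, rfl⟩
  | @tail b c hab hbc ih =>
    intro y hy
    obtain ⟨z, hz, hdz⟩ := ih y hy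
    obtain ⟨e, he, rfl⟩ := hbc
    refine ⟨z ∘ ⇑(Equiv.swap (v₁ ⟨e, he⟩) (v₂ ⟨e, he⟩)), ?_, by rw [dOne_comp, hdz]⟩
    have h1 : swF (v₁ ⟨e, he⟩) (v₂ ⟨e, he⟩) z =
        z + ((coboundary bd z) e) • bd e := by
      rw [swF, ← cob_edge bd v₁ v₂ hbd z ⟨e, he⟩, ← bd_edge bd v₁ v₂ hbd ⟨e, he⟩]
    rw [← swF_comp, h1, cob_add, cob_smul, ← hω e, hz]

lemma cob_ones (hind : LinearIndependent (ZMod 2) ((↑) : S → X))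
    (hspan : Submodule.span (ZMod 2) S = ⊤)
    (hbd : ∀ e : S, bd e.1 = Pi.single (v₁ e) 1 + Pi.single (v₂ e) 1) :
    coboundary bd (fun _ => 1) = 0 := by
  let b : Module.Basis S (ZMod 2) X := Module.Basis.mk hind (by rw [Subtype.range_coe, hspan])
  apply b.ext
  intro i
  rw [show b i = i.1 from Module.Basis.mk_apply hind _ i]
  rw [LinearMap.zero_apply, cob_apply]
  simp only [one_mul]
  rw [bd_edge bd v₁ v₂ hbd i]
  simp only [Pi.add_apply]
  rw [Finset.sum_add_distrib, sgl_sum, sgl_sum]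
  decide

lemma dual_eq_zero (hind : LinearIndependent (ZMod 2) ((↑) : S → X))
    (hspan : Submodule.span (ZMod 2) S = ⊤)
    (ρ : Module.Dual (ZMod 2) X) (hz : ∀ e : S, ρ e.1 = 0) : ρ = 0 := by
  let b : Module.Basis S (ZMod 2) X := Module.Basis.mk hind (by rw [Subtype.range_coe, hspan])
  apply b.ext
  intro i
  rw [show b i = i.1 from Module.Basis.mk_apply hind _ i, LinearMap.zero_apply]
  exact hz i

end Stmt2Aux


open Stmt2Aux

/-- `K = 𝔽₂`, `S` a basis not of orthogonal type with `G(S)`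
connected, so that `G(S)` is the line graph of a connected multigraph `(V, E)`
with `S` identified with `E` (here each edge `e ∈ S` has distinct endpoints
`v₁ e ≠ v₂ e`, and adjacency in `G(S)` corresponds to having exactly one common
endpoint).  Then `β, γ ∈ X*` are in the same `Tr(S)*`-orbit iff
`γ - β ∈ im ω` and either `β ∉ im δ`, or `β ∈ im δ` and `d(y) = d(z)` for some
`y, z` with `δ y = β`, `δ z = γ`. -/
theorem stmt2 {X V : Type*} [AddCommGroup X] [Module (ZMod 2) X]
    [FiniteDimensional (ZMod 2) X] [Fintype V] [DecidableEq V]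
    (ω : X →ₗ[ZMod 2] X →ₗ[ZMod 2] ZMod 2) (halt : ∀ x, ω x x = 0)
    (S : Set X) (hind : LinearIndependent (ZMod 2) ((↑) : S → X))
    (hspan : Submodule.span (ZMod 2) S = ⊤)
    (hnotorth : ¬ IsOrthogonalType ω S)
    (hconn : (transGraph ω S).Connected)
    -- the multigraph structure: endpoints of each edge `e ∈ S`
    (v₁ v₂ : S → V) (hend : ∀ e, v₁ e ≠ v₂ e)
    -- the multigraph is connected
    (hmconn : (SimpleGraph.fromRel fun u w =>
        ∃ e : S, (v₁ e = u ∧ v₂ e = w) ∨ (v₁ e = w ∧ v₂ e = u)).Connected)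
    -- `G(S)` is the line graph of the multigraph: `ω(e,f) = 1` iff `e` and `f`
    -- have exactly one common endpoint
    (hline : ∀ e f : S, e ≠ f →
      (ω e.1 f.1 = 1 ↔
        Xor' (v₁ e = v₁ f ∨ v₁ e = v₂ f) (v₂ e = v₁ f ∨ v₂ e = v₂ f)))
    -- the boundary map `∂ : X → ⟨V⟩` sending each edge to the sum of its endpoints
    (bd : X →ₗ[ZMod 2] (V → ZMod 2))
    (hbd : ∀ e : S, bd e.1 = Pi.single (v₁ e) 1 + Pi.single (v₂ e) 1)
    (β γ : Module.Dual (ZMod 2) X) :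
    (∃ g ∈ transvectionGroup ω S, ∀ x, γ x = β (g x)) ↔
      (γ - β ∈ LinearMap.range ω ∧
        (β ∉ Set.range (coboundary bd) ∨
          (β ∈ Set.range (coboundary bd) ∧
            ∃ y z : V → ZMod 2, coboundary bd y = β ∧ coboundary bd z = γ ∧
              dFun y = dFun z))) := by
  classical
  have hω2 : ∀ x y, ω x y = ∑ v : V, bd x v * bd y v :=
    omega_eq bd ω halt hind hspan v₁ v₂ hend hline hbd
  have hω : ∀ x, ω x = coboundary bd (bd x) := by
    intro x
    apply LinearMap.ext
    intro y
    rw [hω2, cob_apply]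
  have hones : coboundary bd (fun _ => (1 : ZMod 2)) = 0 :=
    cob_ones bd v₁ v₂ hind hspan hbd
  -- tree structure on V
  obtain ⟨r, p, wt, hrp⟩ := tree_exists
    (SimpleGraph.fromRel fun u w =>
      ∃ e : S, (v₁ e = u ∧ v₂ e = w) ∨ (v₁ e = w ∧ v₂ e = u)) hmconn
  have hwt : ∀ v, v ≠ r → wt (p v) < wt v := fun v h => (hrp v h).1
  have hEdge : ∀ v, v ≠ r →
      ∃ e : S, (v₁ e = v ∧ v₂ e = p v) ∨ (v₁ e = p v ∧ v₂ e = v) := by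
    intro v h
    have hadj := (hrp v h).2
    rw [SimpleGraph.fromRel_adj] at hadj
    rcases hadj.2 with ⟨e, he⟩ | ⟨e, he⟩
    · exact ⟨e, he⟩
    · rcases he with ⟨h1, h2⟩ | ⟨h1, h2⟩
      · exact ⟨e, Or.inr ⟨h1, h2⟩⟩
      · exact ⟨e, Or.inl ⟨h1, h2⟩⟩
  have hep : ∀ (v : V) (h : v ≠ r),
      (v₁ ((hEdge v h).choose) = v ∧ v₂ ((hEdge v h).choose) = p v) ∨
      (v₁ ((hEdge v h).choose) = p v ∧ v₂ ((hEdge v h).choose) = v) :=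
    fun v h => (hEdge v h).choose_spec
  set ep : ∀ v : V, v ≠ r → S := fun v h => (hEdge v h).choose with hepdef
  rw [orbit_iff_reach ω halt β γ]
  constructor
  · -- forward direction
    intro hreach
    refine ⟨reach_range ω β γ hreach, ?_⟩
    by_cases hD : β ∈ Set.range (coboundary bd)
    · right
      obtain ⟨y, hy⟩ := hD
      obtain ⟨z, hz, hdz⟩ := reach_cut ω bd v₁ v₂ hω hbd β γ hreach y hy
      refine ⟨⟨y, hy⟩, y, z, hy, hz, ?_⟩
      rw [dFun, dFun, dZero_eq, dZero_eq, hdz]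
    · exact Or.inl hD
  · rintro ⟨hW, hcase⟩
    rcases hcase with hnD | ⟨hD, y, z, hy, hz, hd⟩
    · -- β not a cut
      obtain ⟨x, hx⟩ := hW
      set val : V → ZMod 2 := fun v => if h : v = r then 0 else β ((hEdge v h).choose).1
        with hvaldef
      set y₀ : V → ZMod 2 := pot r p wt hwt val with hy₀def
      set ρ : Module.Dual (ZMod 2) X := β - coboundary bd y₀ with hρdef
      have hρtree : ∀ (v : V) (h : v ≠ r), ρ ((ep v h) : S).1 = 0 := by
        intro v h
        have hval : val v = β ((ep v h) : S).1 := dif_neg h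
        have hcobe : coboundary bd y₀ ((ep v h) : S).1 = val v := by
          rw [cob_edge bd v₁ v₂ hbd y₀ (ep v h)]
          rcases hep v h with ⟨h1, h2⟩ | ⟨h1, h2⟩
          · rw [h1, h2]
            rw [hy₀def, pot_ne r p wt hwt val v h]
            exact z2aca _ _
          · rw [h1, h2]
            rw [hy₀def, pot_ne r p wt hwt val v h, add_comm]
            exact z2aca _ _
        rw [hρdef, LinearMap.sub_apply, hcobe, hval, sub_self]
      have hρne : ∃ h0 : S, ρ h0.1 = 1 := by
        by_contra hc
        push_neg at hc
        have hzero : ρ = 0 := by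
          apply dual_eq_zero hind hspan
          intro e
          rcases z2 (ρ e.1) with h | h
          · exact h
          · exact absurd h (hc e)
        apply hnD
        refine ⟨y₀, ?_⟩
        have := hρdef
        rw [hzero] at this
        have h9 : coboundary bd y₀ = β := by
          have h8 := sub_eq_zero.mp this.symm
          exact h8.symm
        exact h9
      obtain ⟨h0, hρ1⟩ := hρne
      have hβeq : coboundary bd y₀ + ρ = β := by rw [hρdef]; abel
      have hγeq : coboundary bd (y₀ + bd x) + ρ = γ := by
        rw [cob_add, hρdef, ← hω, hx]
        abel
      have hpar : dOne y₀ % 2 = dOne (y₀ + bd x) % 2 := by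
        have hzero : ∑ v : V, bd x v = 0 := by
          have h7 : coboundary bd (fun _ => (1 : ZMod 2)) x = 0 := by rw [hones]; rfl
          rw [cob_apply] at h7
          simpa using h7
        have hcast : ((dOne y₀ : ZMod 2)) = ((dOne (y₀ + bd x) : ZMod 2)) := by
          rw [dOne_cast, dOne_cast]
          have hsum : ∑ v : V, (y₀ + bd x) v = (∑ v : V, y₀ v) + ∑ v : V, bd x v := by
            simp only [Pi.add_apply]
            rw [Finset.sum_add_distrib]
          rw [hsum, hzero, add_zero]
        exact (ZMod.natCast_eq_natCast_iff' _ _ 2).mp hcast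
      rcases le_total (dOne y₀) (dOne (y₀ + bd x)) with hle | hle
      · have hr := weight_reach ω bd v₁ v₂ ρ r p wt ep halt hω hbd hwt hep hρtree
          h0 hρ1 (hend h0) (dOne (y₀ + bd x) - dOne y₀) y₀ (y₀ + bd x) hle le_rfl hpar
        rw [hβeq, hγeq] at hr
        exact hr
      · have hr := weight_reach ω bd v₁ v₂ ρ r p wt ep halt hω hbd hwt hep hρtree
          h0 hρ1 (hend h0) (dOne y₀ - dOne (y₀ + bd x)) (y₀ + bd x) y₀ hle le_rfl hpar.symm
        rw [hβeq, hγeq] at hr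
        exact reach_symm ω halt hr
    · -- β a cut with witnesses
      have hρ0 : ∀ (v : V) (h : v ≠ r),
          (0 : Module.Dual (ZMod 2) X) ((ep v h) : S).1 = 0 := fun v h => rfl
      have hdz : dOne z = dOne y ∨ dOne z = Fintype.card V - dOne y := by
        rw [dFun, dFun, dZero_eq, dZero_eq] at hd
        have h1 := dOne_le (V := V) y
        have h2 := dOne_le (V := V) z
        omega
      rcases hdz with h | h
      · have hr := perm_reach ω bd v₁ v₂ 0 r p wt ep halt hω hbd hwt hep hρ0
          ((Finset.univ.filter fun v => y v ≠ z v).card) y z le_rfl h.symm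
        rw [add_zero, add_zero, hy, hz] at hr
        exact hr
      · set z' : V → ZMod 2 := z + (fun _ => 1) with hz'def
        have hcz' : coboundary bd z' = γ := by
          rw [hz'def, cob_add, hones, add_zero, hz]
        have hdz' : dOne z' = dOne y := by
          rw [hz'def, dOne_add_ones]
          have h2 := dOne_le (V := V) z
          have h3 := dOne_le (V := V) y
          omega
        have hr := perm_reach ω bd v₁ v₂ 0 r p wt ep halt hω hbd hwt hep hρ0
          ((Finset.univ.filter fun v => y v ≠ z' v).card) y z' le_rfl hdz'.symm
        rw [add_zero, add_zero, hy, hcz'] at hr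
        exact hr
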